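/- Let p be a prime and A a set of p nonnegative integers. If there exists an additive complement B of A (i.e., R_{A+B}(n) ≥ 1 for all large n) with liminf_{x→∞}(A(x)B(x) − x) < ∞, then A has the form A = {a + i·p^s + k_i·p^{s+1} : i = 0, ..., p−1} for some integers a ≥ 0, s ≥ 0 and k₀, ..., k_{p−1}. -/

import Mathlib

noncomputable def cnt (S : Set ℕ) (x : ℕ) : ℕ := (S ∩ Set.Iic x).ncard

noncomputable def rep (A B : Set ℕ) (n : ℕ) : ℕ :=
  {q : ℕ × ℕ | q.1 ∈ A ∧ q.2 ∈ B ∧ q.1 + q.2 = n}.ncard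


open Classical in
noncomputable def Bfin (B : Set ℕ) (x : ℕ) : Finset ℕ :=
  (Finset.range (x + 1)).filter (· ∈ B)

open Classical in
noncomputable def Rfin (A : Finset ℕ) (B : Set ℕ) (n : ℕ) : Finset (ℕ × ℕ) :=
  (A ×ˢ Finset.range (n + 1)).filter (fun q => q.2 ∈ B ∧ q.1 + q.2 = n)

lemma cnt_eq (B : Set ℕ) (x : ℕ) : cnt B x = (Bfin B x).card := by
  classical
  rw [cnt, ← Set.ncard_coe_finset]
  congr 1
  ext b
  simp [Bfin, Nat.lt_succ_iff, Set.mem_Iic, and_comm]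

lemma rep_eq (A : Finset ℕ) (B : Set ℕ) (n : ℕ) : rep (↑A) B n = (Rfin A B n).card := by
  classical
  rw [rep, ← Set.ncard_coe_finset]
  congr 1
  ext q
  simp only [Set.mem_setOf_eq, Rfin, Finset.coe_filter, Finset.mem_product,
    Finset.mem_range, Nat.lt_succ_iff]
  constructor
  · rintro ⟨h1, h2, h3⟩
    exact ⟨⟨h1, by omega⟩, h2, h3⟩
  · rintro ⟨⟨h1, _⟩, h2, h3⟩
    exact ⟨h1, h2, h3⟩

lemma cnt_A_eq (A : Finset ℕ) (x : ℕ) (hx : ∀ a ∈ A, a ≤ x) : cnt (↑A) x = A.card := by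
  rw [cnt, ← Set.ncard_coe_finset]
  congr 1
  ext a
  simp only [Set.mem_inter_iff, Finset.mem_coe, Set.mem_Iic]
  exact ⟨fun h => h.1, fun h => ⟨h, hx a h⟩⟩

lemma exact_tiling (p : ℕ) (hp : p.Prime) (A : Finset ℕ) (hcard : A.card = p) (B : Set ℕ)
    (hcompl : ∃ n₀ : ℕ, ∀ n ≥ n₀, 1 ≤ rep (↑A) B n)
    (hliminf : ∃ C : ℤ, ∀ N : ℕ, ∃ x ≥ N,
      (cnt (↑A) x : ℤ) * (cnt B x : ℤ) - (x : ℤ) ≤ C) :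
    ∃ N, ∀ n ≥ N, rep (↑A) B n = 1 := by
  classical
  obtain ⟨n₀, hn₀⟩ := hcompl
  obtain ⟨C, hC⟩ := hliminf
  have hA : A.Nonempty := Finset.card_pos.mp (by rw [hcard]; exact hp.pos)
  set M : ℕ := A.max' hA with hM
  have hmem : ∀ a ∈ A, a ≤ M := fun a ha => A.le_max' a ha
  -- total pair count identity
  have hsum : ∀ x : ℕ, ∑ n ∈ Finset.range (x + 1), (Rfin A B n).card
      = ((A ×ˢ Bfin B x).filter (fun q => q.1 + q.2 ≤ x)).card := by
    intro x
    rw [Finset.card_eq_sum_card_fiberwise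
      (f := fun q : ℕ × ℕ => q.1 + q.2) (t := Finset.range (x + 1))
      (fun q hq => by
        simp only [Finset.mem_coe, Finset.mem_filter] at hq
        exact Finset.mem_range.mpr (Nat.lt_succ_of_le hq.2))]
    refine Finset.sum_congr rfl fun n hn => ?_
    have hnx : n ≤ x := by
      have := Finset.mem_range.mp hn; omega
    congr 1
    ext q
    simp only [Finset.mem_filter, Finset.mem_product, Finset.mem_range, Rfin, Bfin,
      Nat.lt_succ_iff]
    constructor
    · rintro ⟨⟨h1, h2⟩, h3, h4⟩
      exact ⟨⟨⟨h1, by omega, h3⟩, by omega⟩, h4⟩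
    · rintro ⟨⟨⟨h1, h2, h3⟩, h4⟩, h5⟩
      exact ⟨⟨h1, by omega⟩, h3, h5⟩
  -- upper bound
  have hupper : ∀ x : ℕ, ∑ n ∈ Finset.range (x + 1), (Rfin A B n).card
      ≤ p * cnt B x := by
    intro x
    rw [hsum x, cnt_eq]
    calc ((A ×ˢ Bfin B x).filter _).card ≤ (A ×ˢ Bfin B x).card :=
          Finset.card_filter_le _ _
      _ = p * (Bfin B x).card := by rw [Finset.card_product, hcard]
  -- lower bound via tiling
  have hD : ∀ x : ℕ, n₀ ≤ x →
      (x + 1 - n₀) + ((Finset.Ico n₀ (x + 1)).filter (fun n => 2 ≤ rep (↑A) B n)).card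
        ≤ ∑ n ∈ Finset.range (x + 1), (Rfin A B n).card := by
    intro x hx
    have h1 : ∑ n ∈ Finset.Ico n₀ (x + 1), (Rfin A B n).card
        ≤ ∑ n ∈ Finset.range (x + 1), (Rfin A B n).card := by
      apply Finset.sum_le_sum_of_subset
      intro n hn
      simp only [Finset.mem_Ico, Finset.mem_range] at *
      omega
    refine le_trans ?_ h1
    have h2 : ∀ n ∈ Finset.Ico n₀ (x + 1),
        1 + (if 2 ≤ rep (↑A) B n then 1 else 0) ≤ (Rfin A B n).card := by
      intro n hn
      simp only [Finset.mem_Ico] at hn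
      have hr := hn₀ n hn.1
      rw [rep_eq] at hr ⊢
      split <;> rename_i h
      · omega
      · omega
    calc (x + 1 - n₀) + ((Finset.Ico n₀ (x + 1)).filter (fun n => 2 ≤ rep (↑A) B n)).card
        = ∑ n ∈ Finset.Ico n₀ (x + 1), (1 + (if 2 ≤ rep (↑A) B n then 1 else 0)) := by
          rw [Finset.sum_add_distrib, Finset.sum_const, Nat.card_Ico, smul_eq_mul, mul_one,
            ← Finset.natCast_card_filter]
          simp
      _ ≤ _ := Finset.sum_le_sum h2
  -- D is bounded at good x
  have hgood : ∀ x : ℕ, n₀ ≤ x → M ≤ x →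
      ((cnt (↑A) x : ℤ) * (cnt B x : ℤ) - (x : ℤ) ≤ C) →
      (((Finset.Ico n₀ (x + 1)).filter (fun n => 2 ≤ rep (↑A) B n)).card : ℤ)
        ≤ C + n₀ := by
    intro x hx hMx hCx
    have h1 := hD x hx
    have h2 := hupper x
    have h3 : cnt (↑A) x = p := by
      rw [cnt_A_eq A x (fun a ha => le_trans (hmem a ha) hMx), hcard]
    rw [h3] at hCx
    have h4 : ((x + 1 - n₀ : ℕ) : ℤ)
        + (((Finset.Ico n₀ (x + 1)).filter (fun n => 2 ≤ rep (↑A) B n)).card : ℤ)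
        ≤ (p : ℤ) * (cnt B x : ℤ) := by
      have := le_trans h1 h2
      exact_mod_cast this
    have h5 : ((x + 1 - n₀ : ℕ) : ℤ) = (x : ℤ) + 1 - n₀ := by omega
    omega
  -- conclude by contradiction
  by_contra hcon
  push_neg at hcon
  have hbad : ∀ N : ℕ, ∃ n ≥ N, n₀ ≤ n ∧ 2 ≤ rep (↑A) B n := by
    intro N
    obtain ⟨n, hn1, hn2⟩ := hcon (max N n₀)
    refine ⟨n, le_trans (le_max_left _ _) hn1, le_trans (le_max_right _ _) hn1, ?_⟩
    have := hn₀ n (le_trans (le_max_right _ _) hn1)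
    omega
  choose g hg1 hg2 hg3 using hbad
  set K : ℕ := (C + n₀).toNat + 1 with hK
  -- build K+1 bad numbers
  let nseq : ℕ → ℕ := fun k => Nat.rec (g 0) (fun _ prev => g (prev + 1)) k
  have hseq0 : ∀ k, nseq (k + 1) = g (nseq k + 1) := fun k => rfl
  have hseqmono : StrictMono nseq := strictMono_nat_of_lt_succ (fun k => by
    rw [hseq0]; exact lt_of_lt_of_le (Nat.lt_succ_self _) (hg1 _))
  have hseqbad : ∀ k, n₀ ≤ nseq k ∧ 2 ≤ rep (↑A) B (nseq k) := by
    intro k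
    cases k with
    | zero => exact ⟨hg2 0, hg3 0⟩
    | succ k => rw [hseq0]; exact ⟨hg2 _, hg3 _⟩
  set x₀ : ℕ := nseq K with hx₀
  have himg : (Finset.range (K + 1)).image nseq
      ⊆ (Finset.Ico n₀ (x₀ + 1)).filter (fun n => 2 ≤ rep (↑A) B n) := by
    intro n hn
    simp only [Finset.mem_image, Finset.mem_range] at hn
    obtain ⟨k, hk, rfl⟩ := hn
    simp only [Finset.mem_filter, Finset.mem_Ico]
    refine ⟨⟨(hseqbad k).1, ?_⟩, (hseqbad k).2⟩
    have : nseq k ≤ nseq K := hseqmono.monotone (by omega : k ≤ K)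
    omega
  have hcnt : K + 1 ≤ ((Finset.Ico n₀ (x₀ + 1)).filter (fun n => 2 ≤ rep (↑A) B n)).card := by
    calc K + 1 = ((Finset.range (K + 1)).image nseq).card := by
          rw [Finset.card_image_of_injective _ hseqmono.injective, Finset.card_range]
      _ ≤ _ := Finset.card_le_card himg
  -- get a good x beyond x₀
  obtain ⟨x, hx1, hx2⟩ := hC (max x₀ (max n₀ M))
  have hxn₀ : n₀ ≤ x := le_trans (le_trans (le_max_left _ _) (le_max_right _ _)) hx1
  have hxM : M ≤ x := le_trans (le_trans (le_max_right _ _) (le_max_right _ _)) hx1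
  have hxx₀ : x₀ ≤ x := le_trans (le_max_left _ _) hx1
  have hmono : ((Finset.Ico n₀ (x₀ + 1)).filter (fun n => 2 ≤ rep (↑A) B n)).card
      ≤ ((Finset.Ico n₀ (x + 1)).filter (fun n => 2 ≤ rep (↑A) B n)).card := by
    apply Finset.card_le_card
    apply Finset.filter_subset_filter
    intro n hn
    simp only [Finset.mem_Ico] at *
    omega
  have hfin := hgood x hxn₀ hxM hx2
  have h6 : ((K + 1 : ℕ) : ℤ) ≤ (((Finset.Ico n₀ (x + 1)).filter
      (fun n => 2 ≤ rep (↑A) B n)).card : ℤ) :=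
    Int.ofNat_le.mpr (le_trans hcnt hmono)
  have h7 : (K : ℤ) + 1 ≤ C + (n₀ : ℤ) := by
    push_cast at h6
    omega
  rw [hK] at h7
  have h8 : (((C + ↑n₀).toNat : ℤ)) + 1 + 1 ≤ C + n₀ := by push_cast at h7 ⊢; omega
  have h9 : C + (n₀:ℤ) ≤ ((C + ↑n₀).toNat : ℤ) := Int.self_le_toNat _
  omega


open Classical in
lemma uniq_filter (A : Finset ℕ) (B : Set ℕ) (n : ℕ)
    (h1 : rep (↑A) B n = 1) (hM : ∀ a ∈ A, a ≤ n) :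
    (A.filter (fun a => (n - a) ∈ B)).card = 1 := by
  classical
  rw [rep, Set.ncard_eq_one] at h1
  obtain ⟨⟨a₀, b₀⟩, hq⟩ := h1
  have hq₀ : a₀ ∈ A ∧ b₀ ∈ B ∧ a₀ + b₀ = n := by
    have h : (a₀, b₀) ∈ ({q : ℕ × ℕ | q.1 ∈ (↑A : Set ℕ) ∧ q.2 ∈ B ∧ q.1 + q.2 = n}) := by
      rw [hq]; rfl
    simpa using h
  rw [Finset.card_eq_one]
  refine ⟨a₀, ?_⟩
  rw [Finset.eq_singleton_iff_unique_mem]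
  constructor
  · refine Finset.mem_filter.mpr ⟨hq₀.1, ?_⟩
    have h : n - a₀ = b₀ := by omega
    rw [h]; exact hq₀.2.1
  · intro a ha
    rw [Finset.mem_filter] at ha
    have hle := hM a ha.1
    have h : (a, n - a) ∈ ({q : ℕ × ℕ | q.1 ∈ (↑A : Set ℕ) ∧ q.2 ∈ B ∧ q.1 + q.2 = n}) :=
      ⟨by simpa using ha.1, ha.2, by omega⟩
    rw [hq] at h
    have := Set.mem_singleton_iff.mp h
    exact congrArg Prod.fst this

open Classical in
lemma periodic_B (A : Finset ℕ) (hA : A.Nonempty) (B : Set ℕ) (N : ℕ)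
    (huniq : ∀ n ≥ N, (A.filter (fun a => (n - a) ∈ B)).card = 1) :
    ∃ k₁ m : ℕ, N ≤ k₁ ∧ 0 < m ∧ ∀ n ≥ k₁, ((n + m) ∈ B ↔ n ∈ B) := by
  classical
  set M : ℕ := A.max' hA with hMdef
  set a₀ : ℕ := A.min' hA with ha₀def
  have ha₀A : a₀ ∈ A := A.min'_mem hA
  have ha₀le : ∀ a ∈ A, a₀ ≤ a := fun a ha => A.min'_le a ha
  have haM : ∀ a ∈ A, a ≤ M := fun a ha => A.le_max' a ha
  have hrec : ∀ n ≥ N, ((n ∈ B) ↔ ∀ a ∈ A, a ≠ a₀ → (n + a₀ - a) ∉ B) := by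
    intro n hn
    have hu := huniq (n + a₀) (by omega)
    have hcle := Finset.card_le_one.mp (le_of_eq hu)
    have hn' : n + a₀ - a₀ = n := by omega
    constructor
    · intro hmem a haA hne hcon
      have h1 : a₀ ∈ A.filter (fun a => (n + a₀ - a) ∈ B) :=
        Finset.mem_filter.mpr ⟨ha₀A, by rw [hn']; exact hmem⟩
      have h2 : a ∈ A.filter (fun a => (n + a₀ - a) ∈ B) :=
        Finset.mem_filter.mpr ⟨haA, hcon⟩
      exact hne (hcle a h2 a₀ h1)
    · intro hall
      have hne : (A.filter (fun a => (n + a₀ - a) ∈ B)).Nonempty := by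
        rw [← Finset.card_pos, hu]; omega
      obtain ⟨a, ha⟩ := hne
      rw [Finset.mem_filter] at ha
      by_cases hcase : a = a₀
      · rw [hcase, hn'] at ha; exact ha.2
      · exact absurd ha.2 (hall a ha.1 hcase)
  have main : ∀ kl kr : ℕ, N ≤ kl → kl < kr →
      (∀ i : Fin (M + 1), ((kl + (i : ℕ)) ∈ B ↔ (kr + (i : ℕ)) ∈ B)) →
      ∃ k₁ m : ℕ, N ≤ k₁ ∧ 0 < m ∧ ∀ n ≥ k₁, ((n + m) ∈ B ↔ n ∈ B) := by
    intro kl kr hNl hlt hiff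
    have hstep : ∀ i : ℕ, ((kl + i) ∈ B ↔ (kr + i) ∈ B) := by
      intro i
      induction i using Nat.strong_induction_on with
      | _ i IH =>
        by_cases hiM : i ≤ M
        · have := hiff ⟨i, by omega⟩
          simpa using this
        · have hr1 := hrec (kl + i) (by omega)
          have hr2 := hrec (kr + i) (by omega)
          rw [hr1, hr2]
          constructor
          · intro h a haA hne
            have h1 := h a haA hne
            have hlb := ha₀le a haA
            have hub := haM a haA
            have e1 : kl + i + a₀ - a = kl + (i - (a - a₀)) := by omega
            have e2 : kr + i + a₀ - a = kr + (i - (a - a₀)) := by omega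
            rw [e2, ← (IH (i - (a - a₀)) (by omega))]
            rw [e1] at h1
            exact h1
          · intro h a haA hne
            have h1 := h a haA hne
            have hlb := ha₀le a haA
            have hub := haM a haA
            have e1 : kl + i + a₀ - a = kl + (i - (a - a₀)) := by omega
            have e2 : kr + i + a₀ - a = kr + (i - (a - a₀)) := by omega
            rw [e1, (IH (i - (a - a₀)) (by omega))]
            rw [e2] at h1
            exact h1
    refine ⟨kl, kr - kl, hNl, by omega, fun n hn => ?_⟩
    have h := hstep (n - kl)
    have e1 : kl + (n - kl) = n := by omega
    have e2 : kr + (n - kl) = n + (kr - kl) := by omega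
    rw [e1, e2] at h
    exact h.symm
  have hinf : (Set.Ici N).Infinite := Set.Ici_infinite N
  obtain ⟨k₁, hk₁, k₂, hk₂, hne, heq⟩ :=
    hinf.exists_ne_map_eq_of_mapsTo
      (f := fun k (i : Fin (M + 1)) => decide ((k + (i : ℕ)) ∈ B))
      (t := (Set.univ : Set (Fin (M + 1) → Bool)))
      (fun k _ => Set.mem_univ _) (Set.finite_univ)
  have hiff : ∀ i : Fin (M + 1), ((k₁ + (i : ℕ)) ∈ B ↔ (k₂ + (i : ℕ)) ∈ B) := by
    intro i
    have := congrFun heq i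
    simpa [decide_eq_decide] using this
  rcases Nat.lt_or_ge k₁ k₂ with hlt | hge
  · exact main k₁ k₂ hk₁ hlt hiff
  · have hlt : k₂ < k₁ := by omega
    exact main k₂ k₁ hk₂ hlt (fun i => (hiff i).symm)


open Classical in
lemma master (A : Finset ℕ) (B : Set ℕ) (N k₁ m n₁ : ℕ) (hm : 0 < m)
    (huniq : ∀ n ≥ N, (A.filter (fun a => (n - a) ∈ B)).card = 1)
    (hper : ∀ n ≥ k₁, ((n + m) ∈ B ↔ n ∈ B))
    (hn₁N : N ≤ n₁) (hn₁k : ∀ a ∈ A, k₁ + a ≤ n₁)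
    (ζ : ℂ) (hζ : ζ ^ m = 1) :
    (∑ a ∈ A, ζ ^ a) * (∑ b ∈ (Finset.Ico n₁ (n₁ + m)).filter (· ∈ B), ζ ^ b)
      = ∑ n ∈ Finset.Ico n₁ (n₁ + m), ζ ^ n := by
  classical
  set Wsum : ℕ → ℂ := fun w => ∑ b ∈ Finset.Ico w (w + m), (if b ∈ B then ζ ^ b else 0)
    with hWdef
  have hshift : ∀ w, k₁ ≤ w → Wsum w = Wsum (w + 1) := by
    intro w hw
    have h1 : Wsum w = (if w ∈ B then ζ ^ w else 0)
        + ∑ b ∈ Finset.Ico (w + 1) (w + m), (if b ∈ B then ζ ^ b else 0) := by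
      simp only [hWdef]
      exact Finset.sum_eq_sum_Ico_succ_bot (by omega) _
    have h2 : Wsum (w + 1) = ∑ b ∈ Finset.Ico (w + 1) (w + m), (if b ∈ B then ζ ^ b else 0)
        + (if (w + m) ∈ B then ζ ^ (w + m) else 0) := by
      simp only [hWdef]
      have e : w + 1 + m = (w + m) + 1 := by omega
      rw [e]
      exact Finset.sum_Ico_succ_top (by omega) _
    have h3 : (if (w + m) ∈ B then ζ ^ (w + m) else 0) = (if w ∈ B then ζ ^ w else 0) := by
      rw [pow_add, hζ, mul_one]
      exact if_congr (hper w hw) rfl rfl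
    rw [h1, h2, h3]; ring
  have hwin : ∀ j w, k₁ ≤ w → Wsum w = Wsum (w + j) := by
    intro j
    induction j with
    | zero => intro w _; rfl
    | succ j IH =>
      intro w hw
      have e : w + (j + 1) = (w + j) + 1 := by omega
      rw [e, IH w hw, hshift (w + j) (by omega)]
  have hW : ∀ a ∈ A, Wsum (n₁ - a) = Wsum n₁ := by
    intro a ha
    have h := hn₁k a ha
    have := hwin a (n₁ - a) (by omega)
    rw [this]
    congr 1
    omega
  have hone : ∀ n ∈ Finset.Ico n₁ (n₁ + m),
      ∑ a ∈ A, (if (n - a) ∈ B then (1 : ℂ) else 0) = 1 := by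
    intro n hn
    simp only [Finset.mem_Ico] at hn
    rw [Finset.sum_boole]
    rw [huniq n (by omega)]
    simp
  calc (∑ a ∈ A, ζ ^ a) * (∑ b ∈ (Finset.Ico n₁ (n₁ + m)).filter (· ∈ B), ζ ^ b)
      = (∑ a ∈ A, ζ ^ a) * Wsum n₁ := by
        congr 1
        simp only [hWdef, Finset.sum_filter]
    _ = ∑ a ∈ A, ζ ^ a * Wsum (n₁ - a) := by
        rw [Finset.sum_mul]
        exact Finset.sum_congr rfl fun a ha => by rw [hW a ha]
    _ = ∑ a ∈ A, ∑ n ∈ Finset.Ico n₁ (n₁ + m), (if (n - a) ∈ B then ζ ^ n else 0) := by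
        refine Finset.sum_congr rfl fun a ha => ?_
        have han : a ≤ n₁ := by have := hn₁k a ha; omega
        have hmap : Finset.Ico n₁ (n₁ + m)
            = (Finset.Ico (n₁ - a) (n₁ + m - a)).map (addLeftEmbedding a) := by
          rw [Finset.map_add_left_Ico]
          congr 1 <;> omega
        rw [hmap, Finset.sum_map]
        have e : n₁ + m - a = (n₁ - a) + m := by omega
        simp only [hWdef, Finset.mul_sum]
        rw [← e]
        refine Finset.sum_congr rfl fun b hb => ?_
        simp only [addLeftEmbedding_apply]
        have e2 : a + b - a = b := by omega
        rw [e2, mul_ite, mul_zero, pow_add]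
    _ = ∑ n ∈ Finset.Ico n₁ (n₁ + m), ∑ a ∈ A, (if (n - a) ∈ B then ζ ^ n else 0) :=
        Finset.sum_comm
    _ = ∑ n ∈ Finset.Ico n₁ (n₁ + m), ζ ^ n := by
        refine Finset.sum_congr rfl fun n hn => ?_
        have h := hone n hn
        calc ∑ a ∈ A, (if (n - a) ∈ B then ζ ^ n else 0)
            = (∑ a ∈ A, (if (n - a) ∈ B then (1 : ℂ) else 0)) * ζ ^ n := by
              rw [Finset.sum_mul]
              exact Finset.sum_congr rfl fun a _ => by rw [ite_mul, one_mul, zero_mul]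
          _ = ζ ^ n := by rw [h, one_mul]

open Polynomial

lemma cyc_dvd_of_root {n : ℕ} (hn : 0 < n) {ζ : ℂ} (hζ : IsPrimitiveRoot ζ n)
    (f : ℤ[X]) (hf : aeval ζ f = 0) : cyclotomic n ℤ ∣ f := by
  have h1 : map (Int.castRingHom ℚ) (cyclotomic n ℤ) ∣ map (Int.castRingHom ℚ) f := by
    rw [map_cyclotomic_int, cyclotomic_eq_minpoly_rat hζ hn]
    apply minpoly.dvd
    rw [aeval_def, ← eval_map] at hf ⊢
    rw [Polynomial.map_map]
    rwa [RingHom.ext_int ((algebraMap ℚ ℂ).comp (Int.castRingHom ℚ)) (algebraMap ℤ ℂ)]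
  exact (map_dvd_map (Int.castRingHom ℚ) (fun a b => by simp) (cyclotomic.monic n ℤ)).mp h1

lemma structure_of_root (p : ℕ) (hp : p.Prime) (A : Finset ℕ) (hcard : A.card = p)
    (j : ℕ) (ζ : ℂ) (hζ : IsPrimitiveRoot ζ (p ^ (j + 1)))
    (hroot : ∑ a ∈ A, ζ ^ a = 0) :
    ∃ (a : ℤ), 0 ≤ a ∧ ∃ (s : ℕ) (k : Fin p → ℤ),
      Finset.image (fun x : ℕ => (x : ℤ)) A =
        Finset.image (fun i : Fin p => a + (i : ℤ) * p ^ s + k i * p ^ (s + 1))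
          Finset.univ := by
  classical
  haveI : Fact p.Prime := ⟨hp⟩
  set q : ℕ := p ^ (j + 1) with hqdef
  set P : ℕ := p ^ j with hPdef
  have hppos : 0 < p := hp.pos
  have hPpos : 0 < P := pow_pos hppos j
  have hqpos : 0 < q := pow_pos hppos (j + 1)
  have hq : q = P * p := pow_succ p j
  have hPq : P ≤ q := by
    rw [hq]; exact Nat.le_mul_of_pos_right P hppos
  set c : ℕ → ℕ := fun r => (A.filter (fun a => a % q = r)).card with hcdef
  set cpoly : ℤ[X] := ∑ r ∈ Finset.range q, C ((c r : ℤ)) * X ^ r with hcpdef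
  have hcoeff : ∀ n : ℕ, cpoly.coeff n = if n < q then (c n : ℤ) else 0 := by
    intro n
    rw [hcpdef, finset_sum_coeff]
    simp only [coeff_C_mul, coeff_X_pow, mul_ite, mul_one, mul_zero]
    rw [Finset.sum_ite_eq (Finset.range q) n (fun r => (c r : ℤ))]
    simp [Finset.mem_range]
  have hmaps : ∀ a ∈ A, a % q ∈ Finset.range q := fun a _ =>
    Finset.mem_range.mpr (Nat.mod_lt a hqpos)
  have heval : aeval ζ cpoly = 0 := by
    have hza : ∀ a ∈ A, ζ ^ a = ζ ^ (a % q) := by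
      intro a _
      conv_lhs => rw [← Nat.div_add_mod a q]
      rw [pow_add, pow_mul, hζ.pow_eq_one, one_pow, one_mul]
    have h2 : ∑ a ∈ A, ζ ^ a = ∑ r ∈ Finset.range q, (c r : ℂ) * ζ ^ r := by
      rw [← Finset.sum_fiberwise_of_maps_to hmaps (fun a => ζ ^ a)]
      refine Finset.sum_congr rfl fun r _ => ?_
      have hco : ∀ a ∈ A.filter (fun a => a % q = r), ζ ^ a = ζ ^ r := by
        intro a ha
        simp only [Finset.mem_filter] at ha
        rw [hza a ha.1, ha.2]
      rw [Finset.sum_congr rfl hco, Finset.sum_const]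
      simp [hcdef, nsmul_eq_mul]
    rw [hcpdef]
    simp only [map_sum, map_mul, aeval_C, aeval_X_pow]
    rw [← hroot, h2]
    refine Finset.sum_congr rfl fun r _ => ?_
    simp
  have hdvd : cyclotomic q ℤ ∣ cpoly := cyc_dvd_of_root hqpos hζ cpoly heval
  obtain ⟨u, hu⟩ := hdvd
  have hc_sum : ∑ r ∈ Finset.range q, c r = p := by
    rw [hcdef, ← Finset.card_eq_sum_card_fiberwise hmaps, hcard]
  have heval1 : cpoly.eval 1 = (p : ℤ) := by
    rw [hcpdef]
    simp [eval_finset_sum]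
    rw [← Nat.cast_sum, hc_sum]
  have hΦ1 : (cyclotomic q ℤ).eval 1 = (p : ℤ) := by
    rw [hqdef]; exact eval_one_cyclotomic_prime_pow j
  have hu1 : u.eval 1 = 1 := by
    have h := congrArg (eval 1) hu
    rw [eval_mul, heval1, hΦ1] at h
    have hpne : (p : ℤ) ≠ 0 := by exact_mod_cast hp.ne_zero
    have h2 : (p:ℤ) * u.eval 1 = (p:ℤ) * 1 := by linarith
    exact mul_left_cancel₀ hpne h2
  have hune : u ≠ 0 := fun h => by simp [h] at hu1
  have hcne : cpoly ≠ 0 := fun h => by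
    rw [h] at heval1
    have : (p:ℤ) = 0 := by simpa using heval1.symm
    exact hp.ne_zero (by exact_mod_cast this)
  have hdegc : cpoly.natDegree < q := by
    have : cpoly.natDegree ≤ q - 1 := by
      rw [natDegree_le_iff_coeff_eq_zero]
      intro N hN
      rw [hcoeff]
      have : ¬ N < q := by omega
      simp [this]
    omega
  have hdegΦ : (cyclotomic q ℤ).natDegree = q - P := by
    rw [hqdef, natDegree_cyclotomic, Nat.totient_prime_pow hp (Nat.succ_pos j)]
    simp only [Nat.succ_sub_one, hPdef]
    rw [Nat.mul_sub, mul_one, ← pow_succ]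
  have hdegu : u.natDegree < P := by
    have hmul := natDegree_mul (cyclotomic_ne_zero q ℤ) hune
    rw [← hu, hdegΦ] at hmul
    omega
  have hΦ : cyclotomic q ℤ = ∑ i ∈ Finset.range p, (X ^ P : ℤ[X]) ^ i := by
    rw [hqdef, hPdef]; exact cyclotomic_prime_pow_eq_geom_sum hp
  -- key coefficient identity
  have hkey : ∀ r' < P, ∀ i < p, (c (r' + i * P) : ℤ) = u.coeff r' := by
    intro r' hr' i hi
    have hlt : r' + i * P < q := by
      have h1 : (i + 1) * P ≤ p * P := Nat.mul_le_mul_right P hi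
      have h2 : q = p * P := by rw [hq, mul_comm]
      have h3 : (i + 1) * P = i * P + P := by ring
      omega
    have hL : cpoly.coeff (r' + i * P) = (c (r' + i * P) : ℤ) := by
      rw [hcoeff]; simp [hlt]
    rw [← hL, hu, hΦ, Finset.sum_mul, finset_sum_coeff]
    have hterm : ∀ i' ∈ Finset.range p,
        ((X ^ P : ℤ[X]) ^ i' * u).coeff (r' + i * P)
          = if i' = i then u.coeff r' else 0 := by
      intro i' hi'
      rw [← pow_mul, mul_comm ((X : ℤ[X]) ^ (P * i')) u, coeff_mul_X_pow']
      by_cases hii : i' = i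
      · subst hii
        have he : P * i' = i' * P := mul_comm _ _
        have hle : P * i' ≤ r' + i' * P := by omega
        rw [if_pos hle, if_pos rfl]
        congr 1
        omega
      · have hmm : P * i = i * P := mul_comm _ _
        rcases Nat.lt_or_ge i' i with hlt' | hgt'
        · have hml : P * i' ≤ P * i := Nat.mul_le_mul_left P (le_of_lt hlt')
          have hcond : P * i' ≤ r' + i * P := by omega
          rw [if_pos hcond, if_neg hii]
          apply coeff_eq_zero_of_natDegree_lt
          have h2 : P * (i' + 1) ≤ P * i := Nat.mul_le_mul_left P hlt'
          rw [mul_add, mul_one] at h2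
          omega
        · have hgt : i < i' := lt_of_le_of_ne hgt' (fun h => hii h.symm)
          have h2 : P * (i + 1) ≤ P * i' := Nat.mul_le_mul_left P hgt
          rw [mul_add, mul_one] at h2
          have hcond : ¬ (P * i' ≤ r' + i * P) := by omega
          rw [if_neg hcond, if_neg hii]
    rw [Finset.sum_congr rfl hterm, Finset.sum_ite_eq' (Finset.range p) i
      (fun _ => u.coeff r')]
    simp [Finset.mem_range.mpr hi]
  have hufromc : ∀ r' < P, u.coeff r' = (c r' : ℤ) := by
    intro r' hr'
    have h := hkey r' hr' 0 hppos
    simpa using h.symm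
  have hsum_u : ∑ r' ∈ Finset.range P, (c r' : ℤ) = 1 := by
    have he : u.eval 1 = ∑ r' ∈ Finset.range P, u.coeff r' := by
      rw [eval_eq_sum_range' hdegu]
      simp
    rw [← hu1, he]
    refine Finset.sum_congr rfl fun r' hr' => ?_
    exact (hufromc r' (Finset.mem_range.mp hr')).symm
  have hsum_n : ∑ r' ∈ Finset.range P, c r' = 1 := by
    have : ((∑ r' ∈ Finset.range P, c r' : ℕ) : ℤ) = 1 := by
      push_cast; exact hsum_u
    exact_mod_cast this
  obtain ⟨r₀, hr₀mem, hr₀ne⟩ : ∃ r₀ ∈ Finset.range P, c r₀ ≠ 0 := by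
    by_contra h
    push_neg at h
    rw [Finset.sum_eq_zero h] at hsum_n
    omega
  have hr₀lt : r₀ < P := Finset.mem_range.mp hr₀mem
  have hr₀1 : c r₀ = 1 := by
    have hle : c r₀ ≤ 1 := hsum_n ▸ Finset.single_le_sum (fun _ _ => Nat.zero_le _) hr₀mem
    omega
  have hother : ∀ r' < P, r' ≠ r₀ → c r' = 0 := by
    intro r' hr' hne
    have h1 : c r₀ + ∑ x ∈ (Finset.range P).erase r₀, c x = 1 := by
      rw [Finset.add_sum_erase _ _ hr₀mem]; exact hsum_n
    have h2 : ∑ x ∈ (Finset.range P).erase r₀, c x = 0 := by omega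
    have := (Finset.sum_eq_zero_iff.mp h2) r' (Finset.mem_erase.mpr ⟨hne, Finset.mem_range.mpr hr'⟩)
    exact this
  have hc_pattern : ∀ r < q, c r = if r % P = r₀ then 1 else 0 := by
    intro r hr
    have hdiv : r / P < p := by
      rw [Nat.div_lt_iff_lt_mul hPpos]
      have hm : P * p = p * P := mul_comm _ _
      rw [hq] at hr; omega
    have h1 := hkey (r % P) (Nat.mod_lt r hPpos) (r / P) hdiv
    rw [hufromc (r % P) (Nat.mod_lt r hPpos)] at h1
    have h2 : r % P + r / P * P = r := by
      rw [mul_comm]; exact Nat.mod_add_div r P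
    rw [h2] at h1
    have h3 : c r = c (r % P) := by exact_mod_cast h1
    by_cases hcase : r % P = r₀
    · simp [h3, hcase, hr₀1]
    · simp [h3, hother (r % P) (Nat.mod_lt r hPpos) hcase, hcase]
  -- every element's residue pattern
  have hfib : ∀ a ∈ A, a % q % P = r₀ ∧ c (a % q) = 1 := by
    intro a ha
    have h1 : c (a % q) ≠ 0 := by
      rw [hcdef]
      have : a ∈ A.filter (fun x => x % q = a % q) := Finset.mem_filter.mpr ⟨ha, rfl⟩
      intro h
      rw [Finset.card_eq_zero] at h
      simp [h] at this
    have h2 := hc_pattern (a % q) (Nat.mod_lt a hqpos)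
    by_cases hcase : a % q % P = r₀
    · exact ⟨hcase, by rw [h2, if_pos hcase]⟩
    · rw [h2, if_neg hcase] at h1; omega
  have hinj : ∀ a ∈ A, ∀ a' ∈ A, a % q / P = a' % q / P → a = a' := by
    intro a ha a' ha' hEq
    have h1 := hfib a ha
    have h2 := hfib a' ha'
    have hmod : a % q = a' % q := by
      have e1 : a % q = a % q % P + P * (a % q / P) := (Nat.mod_add_div _ _).symm
      have e2 : a' % q = a' % q % P + P * (a' % q / P) := (Nat.mod_add_div _ _).symm
      rw [e1, e2, h1.1, h2.1, hEq]
    have hcard1 : (A.filter (fun x => x % q = a % q)).card ≤ 1 := by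
      have h := h1.2; simp only [hcdef] at h; omega
    have hmem1 : a ∈ A.filter (fun x => x % q = a % q) := Finset.mem_filter.mpr ⟨ha, rfl⟩
    have hmem2 : a' ∈ A.filter (fun x => x % q = a % q) :=
      Finset.mem_filter.mpr ⟨ha', hmod.symm⟩
    exact Finset.card_le_one.mp hcard1 a hmem1 a' hmem2
  have hιlt : ∀ a : ℕ, a % q / P < p := by
    intro a
    rw [Nat.div_lt_iff_lt_mul hPpos]
    have hm : P * p = p * P := mul_comm _ _
    have h1 := Nat.mod_lt a hqpos
    omega
  let F : {x // x ∈ A} → Fin p := fun x => ⟨x.1 % q / P, hιlt x.1⟩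
  have hFinj : Function.Injective F := by
    intro x y hxy
    have : (x.1 : ℕ) % q / P = (y.1 : ℕ) % q / P := by
      simpa [F, Fin.ext_iff] using hxy
    exact Subtype.ext (hinj x.1 x.2 y.1 y.2 this)
  have hFbij : Function.Bijective F := by
    rw [Fintype.bijective_iff_injective_and_card]
    exact ⟨hFinj, by simp [Fintype.card_coe, hcard]⟩
  let E := Equiv.ofBijective F hFbij
  refine ⟨(r₀ : ℤ), by positivity, j, fun i => ((E.symm i).1 / q : ℕ), ?_⟩
  have hval : ∀ i : Fin p,
      (r₀ : ℤ) + (i : ℤ) * (p : ℤ) ^ j + ((E.symm i).1 / q : ℕ) * (p : ℤ) ^ (j + 1)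
        = ((E.symm i).1 : ℤ) := by
    intro i
    set b : ℕ := (E.symm i).1 with hbdef
    have hbA : b ∈ A := (E.symm i).2
    have hFi : b % q / P = (i : ℕ) := by
      have := E.apply_symm_apply i
      have h2 : F (E.symm i) = i := this
      simpa [F, Fin.ext_iff] using h2
    have hmodP := (hfib b hbA).1
    have e1 : b % q = r₀ + (i : ℕ) * P := by
      have := (Nat.mod_add_div (b % q) P).symm
      rw [hmodP, hFi] at this
      rw [this, mul_comm]
    have e2 : b = q * (b / q) + b % q := (Nat.div_add_mod b q).symm
    have e3 : b = q * (b / q) + (r₀ + (i : ℕ) * P) := by rw [← e1]; exact e2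
    have : (b : ℤ) = (q : ℤ) * (b / q : ℕ) + ((r₀ : ℤ) + (i : ℕ) * (P : ℤ)) := by
      exact_mod_cast congrArg (fun n : ℕ => (n : ℤ)) e3
    rw [this]
    have hPc : (P : ℤ) = (p : ℤ) ^ j := by rw [hPdef]; push_cast; ring
    have hqc : (q : ℤ) = (p : ℤ) ^ (j + 1) := by rw [hqdef]; push_cast; ring
    rw [hPc, hqc]
    push_cast
    ring
  ext z
  simp only [Finset.mem_image, Finset.mem_univ, true_and]
  constructor
  · rintro ⟨a, ha, rfl⟩
    refine ⟨E ⟨a, ha⟩, ?_⟩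
    rw [hval (E ⟨a, ha⟩)]
    rw [Equiv.symm_apply_apply]
  · rintro ⟨i, rfl⟩
    exact ⟨(E.symm i).1, (E.symm i).2, (hval i).symm⟩

theorem stmt6 (p : ℕ) (hp : p.Prime) (A : Finset ℕ) (hcard : A.card = p)
    (B : Set ℕ)
    (hcompl : ∃ n₀ : ℕ, ∀ n ≥ n₀, 1 ≤ rep (↑A) B n)
    (hliminf : ∃ C : ℤ, ∀ N : ℕ, ∃ x ≥ N,
      (cnt (↑A) x : ℤ) * (cnt B x : ℤ) - (x : ℤ) ≤ C) :
    ∃ (a : ℤ), 0 ≤ a ∧ ∃ (s : ℕ) (k : Fin p → ℤ),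
      Finset.image (fun x : ℕ => (x : ℤ)) A =
        Finset.image (fun i : Fin p => a + (i : ℤ) * p ^ s + k i * p ^ (s + 1))
          Finset.univ := by
  classical
  obtain ⟨N₁, hN₁⟩ := exact_tiling p hp A hcard B hcompl hliminf
  have hA : A.Nonempty := Finset.card_pos.mp (by rw [hcard]; exact hp.pos)
  set M : ℕ := A.max' hA with hMdef
  have haM : ∀ a ∈ A, a ≤ M := fun a ha => A.le_max' a ha
  set N : ℕ := N₁ + M with hNdef
  have huniq : ∀ n ≥ N, (A.filter (fun a => (n - a) ∈ B)).card = 1 := by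
    intro n hn
    exact uniq_filter A B n (hN₁ n (by omega)) (fun a ha => by have := haM a ha; omega)
  obtain ⟨k₁, m, hk₁N, hm, hper⟩ := periodic_B A hA B N huniq
  set n₁ : ℕ := k₁ + M with hn₁def
  have hn₁N : N ≤ n₁ := by omega
  have hn₁k : ∀ a ∈ A, k₁ + a ≤ n₁ := fun a ha => by have := haM a ha; omega
  set Bw : Finset ℕ := (Finset.Ico n₁ (n₁ + m)).filter (· ∈ B) with hBwdef
  have hid : ∀ ζ : ℂ, ζ ^ m = 1 →
      (∑ a ∈ A, ζ ^ a) * (∑ b ∈ Bw, ζ ^ b) = ∑ n ∈ Finset.Ico n₁ (n₁ + m), ζ ^ n :=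
    fun ζ hζ => master A B N k₁ m n₁ hm huniq hper hn₁N hn₁k ζ hζ
  -- evaluation at 1 : p * |Bw| = m
  have hpm : p * Bw.card = m := by
    have h := hid 1 (one_pow m)
    simp only [one_pow, Finset.sum_const, nsmul_eq_mul, mul_one, Nat.card_Ico] at h
    rw [hcard] at h
    have e : n₁ + m - n₁ = m := by omega
    rw [e] at h
    exact_mod_cast h
  have hmne : m ≠ 0 := by omega
  have hpdvd : p ∣ m := ⟨Bw.card, hpm.symm⟩
  set t : ℕ := m.factorization p with htdef
  have ht1 : 0 < t := hp.factorization_pos_of_dvd hmne hpdvd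
  have hqdvd : p ^ t ∣ m := Nat.ordProj_dvd m p
  have hnot : ¬ p ^ (t + 1) ∣ m := Nat.pow_succ_factorization_not_dvd hmne hp
  set q : ℕ := p ^ t with hqdef
  have hqne : q ≠ 0 := pow_ne_zero t hp.ne_zero
  have hqpos : 0 < q := Nat.pos_of_ne_zero hqne
  set ω : ℂ := Complex.exp (2 * Real.pi * Complex.I / q) with hωdef
  have hω : IsPrimitiveRoot ω q := Complex.isPrimitiveRoot_exp q hqne
  have hωm : ω ^ m = 1 := by
    obtain ⟨d, hd⟩ := hqdvd
    rw [hd, pow_mul, hω.pow_eq_one, one_pow]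
  by_cases hcaseA : ∃ i, 0 < i ∧ i < q ∧ (∑ a ∈ A, (ω ^ i) ^ a) = 0
  · -- Case A : structure
    obtain ⟨i, hi0, hiq, hroot⟩ := hcaseA
    set g : ℕ := Nat.gcd i q with hgdef
    have hgdvdq : g ∣ q := Nat.gcd_dvd_right i q
    have hgdvdi : g ∣ i := Nat.gcd_dvd_left i q
    have hgpos : 0 < g := Nat.gcd_pos_of_pos_left q hi0
    set d : ℕ := q / g with hddef
    have hqgd : q = g * d := (Nat.mul_div_cancel' hgdvdq).symm
    have h1 : IsPrimitiveRoot (ω ^ g) d := hω.pow hqpos hqgd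
    have hcop : (i / g).Coprime d := by
      have := Nat.coprime_div_gcd_div_gcd (m := i) (n := q) hgpos
      exact this
    have h2 : IsPrimitiveRoot ((ω ^ g) ^ (i / g)) d := h1.pow_of_coprime (i / g) hcop
    have hωi : ω ^ i = (ω ^ g) ^ (i / g) := by
      rw [← pow_mul, Nat.mul_div_cancel' hgdvdi]
    have hddvd : d ∣ q := Nat.div_dvd_of_dvd hgdvdq
    obtain ⟨e, he, hde⟩ := (Nat.dvd_prime_pow hp).mp hddvd
    have hd1 : d ≠ 1 := by
      intro h
      rw [h, mul_one] at hqgd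
      have := Nat.le_of_dvd hi0 hgdvdi
      omega
    have hepos : e ≠ 0 := by
      intro h
      rw [h, pow_zero] at hde
      exact hd1 hde
    have heeq : e - 1 + 1 = e := by omega
    have h3 : IsPrimitiveRoot (ω ^ i) (p ^ (e - 1 + 1)) := by
      rw [heeq, ← hde, hωi]
      exact h2
    exact structure_of_root p hp A hcard (e - 1) (ω ^ i) h3 hroot
  · -- Case B : contradiction
    exfalso
    push_neg at hcaseA
    have hWzero : ∀ i, 0 < i → i < q → (∑ b ∈ Bw, (ω ^ i) ^ b) = 0 := by
      intro i hi0 hiq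
      have hζm : (ω ^ i) ^ m = 1 := by
        rw [← pow_mul, mul_comm, pow_mul, hωm, one_pow]
      have hζne : (ω ^ i) ≠ 1 := by
        intro h
        have := (hω.pow_eq_one_iff_dvd i).mp h
        have := Nat.le_of_dvd hi0 this
        omega
      have h := hid (ω ^ i) hζm
      have hRHS : (∑ n ∈ Finset.Ico n₁ (n₁ + m), (ω ^ i) ^ n) = 0 := by
        rw [Finset.sum_Ico_eq_sum_range]
        have e : n₁ + m - n₁ = m := by omega
        rw [e]
        have : ∀ k ∈ Finset.range m, (ω ^ i) ^ (n₁ + k) = (ω ^ i) ^ n₁ * (ω ^ i) ^ k :=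
          fun k _ => pow_add _ _ _
        rw [Finset.sum_congr rfl this, ← Finset.mul_sum, geom_sum_eq hζne, hζm]
        simp
      rw [hRHS] at h
      rcases mul_eq_zero.mp h with h' | h'
      · exact absurd h' (hcaseA i hi0 hiq)
      · exact h'
    -- Fourier : |Bw| = q * |{b ∈ Bw : q ∣ b}|
    have hfour : (Bw.card : ℂ) = ((Bw.filter (fun b => q ∣ b)).card : ℂ) * q := by
      have hS : ∑ i ∈ Finset.range q, ∑ b ∈ Bw, (ω ^ i) ^ b = (Bw.card : ℂ) := by
        rw [Finset.sum_eq_single_of_mem 0 (Finset.mem_range.mpr hqpos)]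
        · simp
        · intro i hi hne
          exact hWzero i (Nat.pos_of_ne_zero hne) (Finset.mem_range.mp hi)
      rw [← hS, Finset.sum_comm]
      have hinner : ∀ b ∈ Bw, ∑ i ∈ Finset.range q, (ω ^ i) ^ b
          = if q ∣ b then (q : ℂ) else 0 := by
        intro b _
        have hswap : ∀ i, (ω ^ i) ^ b = (ω ^ b) ^ i := fun i => by
          rw [← pow_mul, mul_comm, pow_mul]
        simp only [hswap]
        by_cases hb : q ∣ b
        · have : ω ^ b = 1 := (hω.pow_eq_one_iff_dvd b).mpr hb
          simp [this, hb]
        · have hne : ω ^ b ≠ 1 := fun h => hb ((hω.pow_eq_one_iff_dvd b).mp h)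
          rw [geom_sum_eq hne]
          have : (ω ^ b) ^ q = 1 := by
            rw [← pow_mul, mul_comm, pow_mul, hω.pow_eq_one, one_pow]
          rw [this]
          simp [hb]
      rw [Finset.sum_congr rfl hinner, Finset.sum_ite, Finset.sum_const, Finset.sum_const]
      simp [nsmul_eq_mul]
    have hBwcard : Bw.card = (Bw.filter (fun b => q ∣ b)).card * q := by exact_mod_cast hfour
    apply hnot
    refine ⟨(Bw.filter (fun b => q ∣ b)).card, ?_⟩
    rw [← hpm, hBwcard, pow_succ]
    ring
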